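/- Let D be a decoherence map on a nonempty compact convex set Ω in a finite-dimensional real vector space V, and let s_i be an extreme point of D(Ω). Then for every s ∈ Ω: D(s) = s_i if and only if s ∈ Ref(s_i). -/

import Mathlib

/-- `s` refines `x` (written `s ≻ x`) relative to the convex set `Ω`:
there exist `p ∈ (0,1]` and `t ∈ Ω` with `x = p • s + (1-p) • t`. -/
def Refines {V : Type*} [AddCommGroup V] [Module ℝ V] (Ω : Set V) (s x : V) : Prop :=
  ∃ p : ℝ, 0 < p ∧ p ≤ 1 ∧ ∃ t ∈ Ω, x = p • s + (1 - p) • t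

/-- The refinement set of `x` in `Ω`: all states of `Ω` refining `x`. -/
def RefSet {V : Type*} [AddCommGroup V] [Module ℝ V] (Ω : Set V) (x : V) : Set V :=
  {s ∈ Ω | Refines Ω s x}

/-- `F` is a face of `Ω`: a convex subset of `Ω` closed under refinement. -/
def IsFaceOf {V : Type*} [AddCommGroup V] [Module ℝ V] (F Ω : Set V) : Prop :=
  F ⊆ Ω ∧ Convex ℝ F ∧ ∀ s' ∈ F, ∀ s ∈ Ω, Refines Ω s s' → s ∈ F

/-- A decoherence map on `Ω`: a linear map sending `Ω` into itself, idempotent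
on `Ω`, and purity-decreasing (if `D ρ ≻ ρ` then `ρ ≻ D ρ`). -/
def IsDecoherence {V : Type*} [AddCommGroup V] [Module ℝ V]
    (Ω : Set V) (D : V →ₗ[ℝ] V) : Prop :=
  D '' Ω ⊆ Ω ∧ (∀ s ∈ Ω, D (D s) = D s) ∧
    ∀ ρ ∈ Ω, Refines Ω (D ρ) ρ → Refines Ω ρ (D ρ)

/-- for a decoherence map `D` on a nonempty compact convex set `Ω`
in a finite-dimensional space and an extreme point `sᵢ` of `D '' Ω`, a state
decoheres to `sᵢ` iff it lies in the refinement set of `sᵢ`. -/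
theorem decoheres_iff_mem_refSet {V : Type*} [NormedAddCommGroup V] [NormedSpace ℝ V]
    [FiniteDimensional ℝ V]
    (Ω : Set V) (hne : Ω.Nonempty) (hcomp : IsCompact Ω) (hconv : Convex ℝ Ω)
    (D : V →ₗ[ℝ] V) (hD : IsDecoherence Ω D)
    (si : V) (hsi : si ∈ (D '' Ω).extremePoints ℝ) :
    ∀ s ∈ Ω, (D s = si ↔ s ∈ RefSet Ω si) := by
  obtain ⟨hDΩ, hidem, hpure⟩ := hD
  have hsiΩ : si ∈ Ω := hDΩ hsi.1
  have hDsi : D si = si := by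
    obtain ⟨s', hs', rfl⟩ := hsi.1
    exact hidem s' hs'
  intro s hsΩ
  constructor
  · -- forward: D s = si → s ∈ RefSet Ω si
    intro hDs
    refine ⟨hsΩ, ?_⟩
    set ρ : V := (1/2 : ℝ) • s + (1/2 : ℝ) • si with hρ
    have hρΩ : ρ ∈ Ω := hconv hsΩ hsiΩ (by norm_num) (by norm_num) (by norm_num)
    have hDρ : D ρ = si := by
      rw [hρ, map_add, map_smul, map_smul, hDs, hDsi, ← add_smul]
      norm_num
    have href : Refines Ω (D ρ) ρ := by
      refine ⟨1/2, by norm_num, by norm_num, s, hsΩ, ?_⟩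
      rw [hDρ, hρ]
      module
    obtain ⟨q, hq0, hq1, u, huΩ, hu⟩ := hpure ρ hρΩ href
    rw [hDρ] at hu
    -- si = q • ρ + (1-q) • u = (q/2) • s + (q/2) • si + (1-q) • u
    have h2 : (0:ℝ) < 1 - q/2 := by linarith
    have h2' : (1 - q/2 : ℝ) ≠ 0 := ne_of_gt h2
    have h3 : (2 - q : ℝ) ≠ 0 := by intro h; linarith
    refine ⟨q/2, by linarith, by linarith,
      (q/2/(1-q/2)) • si + ((1-q)/(1-q/2)) • u, ?_, ?_⟩
    · refine hconv hsiΩ huΩ (by positivity)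
        (div_nonneg (by linarith) (by linarith)) ?_
      field_simp
      ring
    · nth_rewrite 1 [hu]
      rw [hρ]
      match_scalars <;> field_simp <;> ring
  · -- backward: s ∈ RefSet Ω si → D s = si
    rintro ⟨-, p, hp0, hp1, t, htΩ, heq⟩
    have hkey : si = p • D s + (1 - p) • D t := by
      calc si = D si := hDsi.symm
        _ = p • D s + (1 - p) • D t := by rw [heq, map_add, map_smul, map_smul]
    rcases eq_or_lt_of_le hp1 with hp1' | hp1'
    · rw [hkey, hp1']
      simp
    · have := hsi.2 ⟨s, hsΩ, rfl⟩ ⟨t, htΩ, rfl⟩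
        ⟨p, 1 - p, hp0, by linarith, by ring, hkey.symm⟩
      exact this
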